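/- Let 0 < ε ≤ 1 and let ℓ, m be positive integers with ℓ ≥ 2^{m+1}/ε². Let I be a nonempty finite set, P the uniform probability measure on {0,1}^I, and D_1, …, D_ℓ pairwise disjoint nonempty subsets of I each with at most m elements. Then for any A ⊆ {0,1}^I there exists i_0 ∈ [ℓ] such that for every x ∈ {0,1}^{D_{i_0}}, setting S_x = {y ∪ x : y ∈ {0,1}^{I∖D_{i_0}}}, we have |P[A | S_x] − P[A]| ≤ ε. -/

import Mathlib

open Finset

set_option linter.unusedSectionVars false

namespace Stmt14Aux
variable {I : Type*} [Fintype I] [DecidableEq I]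

noncomputable def eta (a : ZMod 2) : ℝ := if a = 0 then 1 else -1

lemma eta_add (a b : ZMod 2) : eta (a + b) = eta a * eta b := by
  fin_cases a <;> fin_cases b <;> simp [eta] <;> norm_num <;> split_ifs <;> simp_all <;> contradiction

noncomputable def chi (S : Finset I) (y : I → ZMod 2) : ℝ := ∏ j ∈ S, eta (y j)

lemma chi_add (S : Finset I) (y y' : I → ZMod 2) :
    chi S (y + y') = chi S y * chi S y' := by
  simp [chi, eta_add, Finset.prod_mul_distrib]

lemma sum_powerset_chi (Dd : Finset I) (z : I → ZMod 2) :
    ∑ S ∈ Dd.powerset, chi S z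
      = if ∀ j ∈ Dd, z j = 0 then (2:ℝ) ^ Dd.card else 0 := by
  have h : ∏ j ∈ Dd, (eta (z j) + 1) = ∑ S ∈ Dd.powerset, chi S z := by
    rw [Finset.prod_add]
    simp [chi]
  rw [← h]
  by_cases hz : ∀ j ∈ Dd, z j = 0
  · rw [if_pos hz]
    rw [Finset.prod_congr rfl (fun j hj => by rw [hz j hj] : ∀ j ∈ Dd, eta (z j) + 1 = eta 0 + 1)]
    simp [eta]
    norm_num
  · rw [if_neg hz]
    push_neg at hz
    obtain ⟨j, hj, hzj⟩ := hz
    apply Finset.prod_eq_zero hj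
    simp [eta, hzj]

lemma card_agree (Dd : Finset I) (x : I → ZMod 2) :
    (univ.filter fun y : I → ZMod 2 => ∀ j ∈ Dd, y j = x j).card = 2 ^ (Ddᶜ.card) := by
  classical
  rw [← Fintype.card_subtype]
  have e : {y : I → ZMod 2 // ∀ j ∈ Dd, y j = x j} ≃ (↥(Ddᶜ : Finset I) → ZMod 2) :=
    { toFun := fun y j => y.1 j.1
      invFun := fun g => ⟨fun j => if h : j ∈ Dd then x j else g ⟨j, by simp [h]⟩,
        fun j hj => by simp [hj]⟩
      left_inv := fun y => by
        ext j
        by_cases h : j ∈ Dd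
        · simp [h, y.2 j h]
        · simp [h]
      right_inv := fun g => by
        ext j
        have hj : (j : I) ∉ Dd := Finset.mem_compl.mp j.2
        simp [hj] }
  rw [Fintype.card_congr e, Fintype.card_fun, Fintype.card_coe]
  simp

lemma card_agree' (Dd : Finset I) (x : I → ZMod 2) :
    (univ.filter fun y : I → ZMod 2 => ∀ j ∈ Dd, x j = y j).card = 2 ^ (Ddᶜ.card) := by
  have h : (univ.filter fun y : I → ZMod 2 => ∀ j ∈ Dd, x j = y j)
      = univ.filter fun y : I → ZMod 2 => ∀ j ∈ Dd, y j = x j :=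
    Finset.filter_congr fun y _ =>
      ⟨fun h j hj => (h j hj).symm, fun h j hj => (h j hj).symm⟩
  rw [h]
  exact card_agree Dd x

lemma zmod2_add_eq_zero (a b : ZMod 2) : a + b = 0 ↔ a = b := by
  revert a b; decide

lemma key (A : Finset (I → ZMod 2)) (Dd : Finset I) :
    ∑ S ∈ Dd.powerset, (∑ y ∈ A, chi S y) ^ 2
      = (2:ℝ) ^ Dd.card *
        ∑ y ∈ A, ∑ y' ∈ A, (if ∀ j ∈ Dd, y j = y' j then (1:ℝ) else 0) := by
  have h1 : ∀ S : Finset I, (∑ y ∈ A, chi S y) ^ 2 = ∑ y ∈ A, ∑ y' ∈ A, chi S (y + y') := by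
    intro S
    rw [sq, Finset.sum_mul_sum]
    exact Finset.sum_congr rfl fun y _ => Finset.sum_congr rfl fun y' _ => (chi_add S y y').symm
  simp_rw [h1]
  rw [Finset.sum_comm, Finset.mul_sum]
  refine Finset.sum_congr rfl fun y _ => ?_
  rw [Finset.sum_comm, Finset.mul_sum]
  refine Finset.sum_congr rfl fun y' _ => ?_
  rw [sum_powerset_chi]
  have hcond : (∀ j ∈ Dd, (y + y') j = 0) ↔ (∀ j ∈ Dd, y j = y' j) := by
    constructor
    · intro h j hj; exact (zmod2_add_eq_zero _ _).mp (h j hj)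
    · intro h j hj; exact (zmod2_add_eq_zero _ _).mpr (h j hj)
  rw [if_congr hcond rfl rfl]
  split_ifs <;> simp

lemma parseval (A : Finset (I → ZMod 2)) :
    ∑ S ∈ (univ : Finset I).powerset, (∑ y ∈ A, chi S y) ^ 2
      = (2:ℝ) ^ (Fintype.card I) * A.card := by
  have hiff : ∀ y y' : I → ZMod 2, (∀ j ∈ (univ : Finset I), y j = y' j) ↔ y' = y :=
    fun y y' => by simp [funext_iff, eq_comm]
  have hR : ∑ y ∈ A, ∑ y' ∈ A,
      (if ∀ j ∈ (univ : Finset I), y j = y' j then (1:ℝ) else 0) = A.card := by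
    simp only [hiff]
    rw [Finset.sum_congr rfl fun y _ => Finset.sum_ite_eq' A y (fun _ => (1:ℝ))]
    simp
  rw [key A univ, hR]
  simp

lemma card_agree2 (Dd : Finset I) (y y' : I → ZMod 2) :
    ((univ.filter fun x : I → ZMod 2 =>
        (∀ j ∈ Dd, y j = x j) ∧ (∀ j ∈ Dd, y' j = x j)).card : ℝ)
      = (if ∀ j ∈ Dd, y j = y' j then (1:ℝ) else 0) * 2 ^ (Ddᶜ.card) := by
  by_cases h : ∀ j ∈ Dd, y j = y' j
  · rw [if_pos h, one_mul]
    have heq : (univ.filter fun x : I → ZMod 2 =>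
        (∀ j ∈ Dd, y j = x j) ∧ (∀ j ∈ Dd, y' j = x j))
        = univ.filter fun x : I → ZMod 2 => ∀ j ∈ Dd, y j = x j := by
      refine Finset.filter_congr fun x _ => ?_
      constructor
      · exact fun hx => hx.1
      · exact fun hx => ⟨hx, fun j hj => (h j hj).symm.trans (hx j hj)⟩
    rw [heq, card_agree' Dd y]
    push_cast
    ring
  · rw [if_neg h, zero_mul]
    push_neg at h
    obtain ⟨j, hj, hne⟩ := h
    rw [Finset.filter_false_of_mem, Finset.card_empty]
    · norm_num
    · intro x _ hx
      exact hne ((hx.1 j hj).trans (hx.2 j hj).symm)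

lemma card_inter_filter (A : Finset (I → ZMod 2)) (P : (I → ZMod 2) → Prop) [DecidablePred P] :
    ((A ∩ univ.filter P).card : ℝ) = ∑ y ∈ A, (if P y then (1:ℝ) else 0) := by
  have h : A ∩ univ.filter P = A.filter P := by
    ext z; simp
  rw [h, Finset.card_filter]
  push_cast
  simp

lemma mul_ind (P Q : Prop) [Decidable P] [Decidable Q] :
    (if P then (1:ℝ) else 0) * (if Q then (1:ℝ) else 0) = if P ∧ Q then (1:ℝ) else 0 := by
  split_ifs <;> simp_all


noncomputable def cc (A : Finset (I → ZMod 2)) (S : Finset I) : ℝ := ∑ y ∈ A, chi S y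

noncomputable def Wd (A : Finset (I → ZMod 2)) (Dd : Finset I) : ℝ :=
  ∑ S ∈ Dd.powerset.erase ∅, cc A S ^ 2

noncomputable def Rd (A : Finset (I → ZMod 2)) (Dd : Finset I) : ℝ :=
  ∑ y ∈ A, ∑ y' ∈ A, (if ∀ j ∈ Dd, y j = y' j then (1:ℝ) else 0)

noncomputable def qd (A : Finset (I → ZMod 2)) (Dd : Finset I) (x : I → ZMod 2) : ℝ :=
  ((A ∩ (univ.filter fun y : I → ZMod 2 => ∀ j ∈ Dd, y j = x j)).card : ℝ)

noncomputable def Vd (A : Finset (I → ZMod 2)) (Dd : Finset I) : ℝ :=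
  ∑ x : I → ZMod 2, (qd A Dd x / 2 ^ (Ddᶜ.card) - (A.card : ℝ) / 2 ^ (Fintype.card I)) ^ 2

lemma hkey (A : Finset (I → ZMod 2)) (Dd : Finset I) :
    (2:ℝ) ^ Dd.card * Rd A Dd = (A.card : ℝ) ^ 2 + Wd A Dd := by
  have h0 := key A Dd
  have hmem : ∅ ∈ Dd.powerset := Finset.empty_mem_powerset _
  have h1 : ∑ S ∈ Dd.powerset, cc A S ^ 2 = cc A ∅ ^ 2 + Wd A Dd :=
    (Finset.add_sum_erase _ _ hmem).symm
  have hc0 : cc A ∅ = A.card := by simp [cc, chi]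
  rw [Rd, ← h0]
  show ∑ S ∈ Dd.powerset, cc A S ^ 2 = _
  rw [h1, hc0]

lemma hq_eq (A : Finset (I → ZMod 2)) (Dd : Finset I) (x : I → ZMod 2) :
    qd A Dd x = ∑ y ∈ A, (if ∀ j ∈ Dd, y j = x j then (1:ℝ) else 0) :=
  card_inter_filter A _

lemma sum_q (A : Finset (I → ZMod 2)) (Dd : Finset I) :
    ∑ x : I → ZMod 2, qd A Dd x = (A.card : ℝ) * 2 ^ (Ddᶜ.card) := by
  simp only [hq_eq]
  rw [Finset.sum_comm]
  have h2 : ∀ y ∈ A, (∑ x : I → ZMod 2, if ∀ j ∈ Dd, y j = x j then (1:ℝ) else 0)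
      = 2 ^ (Ddᶜ.card) := by
    intro y _
    rw [Finset.sum_boole, card_agree' Dd y]
    push_cast
    ring
  rw [Finset.sum_congr rfl h2, Finset.sum_const, nsmul_eq_mul]

lemma sum_q_sq (A : Finset (I → ZMod 2)) (Dd : Finset I) :
    ∑ x : I → ZMod 2, qd A Dd x ^ 2 = Rd A Dd * 2 ^ (Ddᶜ.card) := by
  simp only [hq_eq]
  have expand : ∀ x : I → ZMod 2,
      (∑ y ∈ A, if ∀ j ∈ Dd, y j = x j then (1:ℝ) else 0) ^ 2
      = ∑ y ∈ A, ∑ y' ∈ A,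
          if (∀ j ∈ Dd, y j = x j) ∧ (∀ j ∈ Dd, y' j = x j) then (1:ℝ) else 0 := by
    intro x
    rw [sq, Finset.sum_mul_sum]
    exact Finset.sum_congr rfl fun y _ => Finset.sum_congr rfl fun y' _ => mul_ind _ _
  simp only [expand]
  rw [Finset.sum_comm, Rd, Finset.sum_mul]
  refine Finset.sum_congr rfl fun y _ => ?_
  rw [Finset.sum_comm, Finset.sum_mul]
  refine Finset.sum_congr rfl fun y' _ => ?_
  rw [Finset.sum_boole, card_agree2]

lemma Vd_eq (A : Finset (I → ZMod 2)) (Dd : Finset I) :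
    Vd A Dd = Wd A Dd / 2 ^ (Fintype.card I) := by
  set n := Fintype.card I with hn
  have hde : (2:ℝ) ^ Dd.card * 2 ^ Ddᶜ.card = 2 ^ n := by
    rw [← pow_add]
    congr 1
    exact Finset.card_add_card_compl Dd
  have h2e : (2:ℝ) ^ Ddᶜ.card ≠ 0 := by positivity
  have h2n : (2:ℝ) ^ n ≠ 0 := by positivity
  have hcard_univ : (Fintype.card (I → ZMod 2) : ℝ) = 2 ^ n := by
    rw [Fintype.card_fun]
    push_cast
    simp [hn]
  have expand2 : ∀ x : I → ZMod 2,
      (qd A Dd x / 2 ^ Ddᶜ.card - (A.card : ℝ) / 2 ^ n) ^ 2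
      = qd A Dd x ^ 2 * (1 / 2 ^ Ddᶜ.card) ^ 2
        - qd A Dd x * (2 * ((A.card : ℝ) / 2 ^ n) / 2 ^ Ddᶜ.card)
        + ((A.card : ℝ) / 2 ^ n) ^ 2 := by
    intro x; ring
  have hV : Vd A Dd
      = (∑ x : I → ZMod 2, qd A Dd x ^ 2) * (1 / 2 ^ Ddᶜ.card) ^ 2
        - (∑ x : I → ZMod 2, qd A Dd x) * (2 * ((A.card : ℝ) / 2 ^ n) / 2 ^ Ddᶜ.card)
        + (Fintype.card (I → ZMod 2) : ℝ) * ((A.card : ℝ) / 2 ^ n) ^ 2 := by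
    rw [Vd, Finset.sum_congr rfl fun x _ => expand2 x, Finset.sum_add_distrib,
      Finset.sum_sub_distrib, ← Finset.sum_mul, ← Finset.sum_mul, Finset.sum_const,
      Finset.card_univ, nsmul_eq_mul]
  rw [hV, sum_q, sum_q_sq, hcard_univ]
  have hR : Rd A Dd / 2 ^ Ddᶜ.card = (((A.card : ℝ)) ^ 2 + Wd A Dd) / 2 ^ n := by
    rw [div_eq_div_iff h2e h2n]
    linear_combination (2:ℝ) ^ Ddᶜ.card * hkey A Dd - Rd A Dd * hde
  have e1 : Rd A Dd * 2 ^ Ddᶜ.card * (1 / 2 ^ Ddᶜ.card) ^ 2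
      = Rd A Dd / 2 ^ Ddᶜ.card := by
    field_simp
  have e2 : (A.card : ℝ) * 2 ^ Ddᶜ.card * (2 * ((A.card : ℝ) / 2 ^ n) / 2 ^ Ddᶜ.card)
      = 2 * (A.card : ℝ) ^ 2 / 2 ^ n := by
    field_simp
  have e3 : (2:ℝ) ^ n * ((A.card : ℝ) / 2 ^ n) ^ 2 = (A.card : ℝ) ^ 2 / 2 ^ n := by
    field_simp
  rw [e1, e2, e3, hR]
  ring

lemma sum_W_le {ℓ : ℕ} (D : Fin ℓ → Finset I)
    (hdisj : ∀ i j, i ≠ j → Disjoint (D i) (D j)) (A : Finset (I → ZMod 2)) :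
    ∑ i : Fin ℓ, Wd A (D i) ≤ 2 ^ (Fintype.card I) * A.card := by
  have hpd : (↑(univ : Finset (Fin ℓ)) : Set (Fin ℓ)).PairwiseDisjoint
      (fun i => (D i).powerset.erase ∅) := by
    intro i _ j _ hij
    simp only [Function.onFun]
    rw [Finset.disjoint_left]
    intro S hSi hSj
    obtain ⟨hne, hpi⟩ := Finset.mem_erase.mp hSi
    obtain ⟨_, hpj⟩ := Finset.mem_erase.mp hSj
    obtain ⟨a, ha⟩ := Finset.nonempty_iff_ne_empty.mpr hne
    exact Finset.disjoint_left.mp (hdisj i j hij)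
      (Finset.mem_powerset.mp hpi ha) (Finset.mem_powerset.mp hpj ha)
  have h1 : ∑ i : Fin ℓ, Wd A (D i)
      = ∑ S ∈ univ.biUnion (fun i : Fin ℓ => (D i).powerset.erase ∅), cc A S ^ 2 :=
    (Finset.sum_biUnion hpd).symm
  rw [h1, ← parseval A]
  refine Finset.sum_le_sum_of_subset_of_nonneg ?_ fun S _ _ => sq_nonneg _
  intro S _
  exact Finset.mem_powerset.mpr (Finset.subset_univ S)

lemma single_le (A : Finset (I → ZMod 2)) (Dd : Finset I) (x : I → ZMod 2) :
    (2:ℝ) ^ (Ddᶜ.card)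
        * (qd A Dd x / 2 ^ (Ddᶜ.card) - (A.card : ℝ) / 2 ^ (Fintype.card I)) ^ 2
      ≤ Vd A Dd := by
  set μ : ℝ := (A.card : ℝ) / 2 ^ (Fintype.card I)
  set C := univ.filter fun x' : I → ZMod 2 => ∀ j ∈ Dd, x' j = x j with hC
  have hqc : ∀ x' ∈ C, qd A Dd x' = qd A Dd x := by
    intro x' hx'
    have hx'' : ∀ j ∈ Dd, x' j = x j := (Finset.mem_filter.mp hx').2
    have hfe : (univ.filter fun y : I → ZMod 2 => ∀ j ∈ Dd, y j = x' j)
        = univ.filter fun y : I → ZMod 2 => ∀ j ∈ Dd, y j = x j :=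
      Finset.filter_congr fun y _ =>
        ⟨fun h j hj => (h j hj).trans (hx'' j hj),
         fun h j hj => (h j hj).trans (hx'' j hj).symm⟩
    rw [qd, qd, hfe]
  have h1 : ∑ x' ∈ C, (qd A Dd x' / 2 ^ (Ddᶜ.card) - μ) ^ 2
      = (2:ℝ) ^ (Ddᶜ.card) * (qd A Dd x / 2 ^ (Ddᶜ.card) - μ) ^ 2 := by
    rw [Finset.sum_congr rfl fun x' hx' => by rw [hqc x' hx'], Finset.sum_const,
      nsmul_eq_mul, hC, card_agree]
    push_cast
    ring
  rw [← h1]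
  exact Finset.sum_le_sum_of_subset_of_nonneg (Finset.filter_subset _ _)
    fun _ _ _ => sq_nonneg _

end Stmt14Aux

/-- Conditional concentration lemma: if `ℓ ≥ 2^{m+1}/ε²` and `D_1, …, D_ℓ` are pairwise
disjoint nonempty subsets of `I` of size at most `m`, then for any `A ⊆ {0,1}^I` there is an
index `i₀` such that conditioning on any fixed values on `D_{i₀}` changes the density of `A`
by at most `ε`. -/
theorem stmt14 {I : Type*} [Fintype I] [DecidableEq I] [Nonempty I]
    (ε : ℝ) (hε0 : 0 < ε) (hε1 : ε ≤ 1) (ℓ m : ℕ) (hℓ : 0 < ℓ) (hm : 0 < m)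
    (hlm : (2 : ℝ) ^ (m + 1) / ε ^ 2 ≤ (ℓ : ℝ))
    (D : Fin ℓ → Finset I)
    (hne : ∀ i, (D i).Nonempty) (hDm : ∀ i, (D i).card ≤ m)
    (hdisj : ∀ i j, i ≠ j → Disjoint (D i) (D j))
    (A : Finset (I → ZMod 2)) :
    ∃ i₀ : Fin ℓ, ∀ x : I → ZMod 2,
      let S := Finset.univ.filter fun y : I → ZMod 2 => ∀ j ∈ D i₀, y j = x j
      |((A ∩ S).card : ℝ) / (S.card : ℝ)
        - (A.card : ℝ) / (2 : ℝ) ^ (Fintype.card I)| ≤ ε := by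
  classical
  have hℓR : (0:ℝ) < ℓ := by exact_mod_cast hℓ
  have hε2 : (0:ℝ) < ε ^ 2 := by positivity
  have hlm' : (2:ℝ) ^ (m + 1) ≤ ℓ * ε ^ 2 := by
    rw [div_le_iff₀ hε2] at hlm
    exact hlm
  have hcard_univ : (Fintype.card (I → ZMod 2)) = 2 ^ (Fintype.card I) := by
    simp
  have hA2n : (A.card : ℝ) ≤ 2 ^ (Fintype.card I) := by
    have h := Finset.card_le_univ A
    rw [hcard_univ] at h
    exact_mod_cast h
  have hsumV : ∑ i : Fin ℓ, Stmt14Aux.Vd A (D i)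
      ≤ ∑ _i : Fin ℓ, (2:ℝ) ^ (Fintype.card I) / ℓ := by
    have h1 : ∑ i : Fin ℓ, Stmt14Aux.Vd A (D i)
        = (∑ i : Fin ℓ, Stmt14Aux.Wd A (D i)) / 2 ^ (Fintype.card I) := by
      rw [Finset.sum_div]
      exact Finset.sum_congr rfl fun i _ => Stmt14Aux.Vd_eq A (D i)
    have h2 : (∑ i : Fin ℓ, Stmt14Aux.Wd A (D i)) / 2 ^ (Fintype.card I)
        ≤ (A.card : ℝ) := by
      rw [div_le_iff₀ (by positivity)]
      calc ∑ i : Fin ℓ, Stmt14Aux.Wd A (D i)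
          ≤ 2 ^ (Fintype.card I) * A.card := Stmt14Aux.sum_W_le D hdisj A
        _ = A.card * 2 ^ (Fintype.card I) := by ring
    have h3 : ∑ _i : Fin ℓ, (2:ℝ) ^ (Fintype.card I) / ℓ = 2 ^ (Fintype.card I) := by
      rw [Finset.sum_const, Finset.card_univ, Fintype.card_fin, nsmul_eq_mul]
      field_simp
    rw [h1, h3]
    exact h2.trans hA2n
  have hFin : Nonempty (Fin ℓ) := ⟨⟨0, hℓ⟩⟩
  obtain ⟨i₀, -, hi₀⟩ := Finset.exists_le_of_sum_le Finset.univ_nonempty hsumV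
  refine ⟨i₀, fun x => ?_⟩
  show |((A ∩ (Finset.univ.filter fun y : I → ZMod 2 => ∀ j ∈ D i₀, y j = x j)).card : ℝ)
      / (((Finset.univ.filter fun y : I → ZMod 2 => ∀ j ∈ D i₀, y j = x j)).card : ℝ)
      - (A.card : ℝ) / (2:ℝ) ^ (Fintype.card I)| ≤ ε
  have hScard : (((Finset.univ.filter fun y : I → ZMod 2 => ∀ j ∈ D i₀, y j = x j)).card : ℝ)
      = 2 ^ ((D i₀)ᶜ.card) := by
    rw [Stmt14Aux.card_agree]
    push_cast
    ring
  rw [hScard]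
  set a : ℝ := Stmt14Aux.qd A (D i₀) x / 2 ^ ((D i₀)ᶜ.card)
      - (A.card : ℝ) / 2 ^ (Fintype.card I) with ha
  show |a| ≤ ε
  have h2e : (0:ℝ) < 2 ^ ((D i₀)ᶜ.card) := by positivity
  have h2d : (0:ℝ) < 2 ^ ((D i₀).card) := by positivity
  have hde : (2:ℝ) ^ ((D i₀).card) * 2 ^ ((D i₀)ᶜ.card) = 2 ^ (Fintype.card I) := by
    rw [← pow_add]
    congr 1
    exact Finset.card_add_card_compl (D i₀)
  have hsingle := Stmt14Aux.single_le A (D i₀) x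
  rw [← ha] at hsingle
  have hdm : (2:ℝ) ^ ((D i₀).card) ≤ 2 ^ m :=
    pow_le_pow_right₀ (by norm_num) (hDm i₀)
  have hkey2 : a ^ 2 * (ℓ:ℝ) ≤ 2 ^ m := by
    have h4 : (2:ℝ) ^ ((D i₀)ᶜ.card) * a ^ 2 ≤ 2 ^ (Fintype.card I) / (ℓ:ℝ) :=
      hsingle.trans hi₀
    have h5 : (2:ℝ) ^ ((D i₀)ᶜ.card) * a ^ 2 * (ℓ:ℝ) ≤ 2 ^ (Fintype.card I) :=
      (le_div_iff₀ hℓR).mp h4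
    have h6 : (2:ℝ) ^ ((D i₀)ᶜ.card) * (a ^ 2 * (ℓ:ℝ))
        ≤ 2 ^ ((D i₀)ᶜ.card) * 2 ^ ((D i₀).card) := by
      calc (2:ℝ) ^ ((D i₀)ᶜ.card) * (a ^ 2 * (ℓ:ℝ))
          = 2 ^ ((D i₀)ᶜ.card) * a ^ 2 * (ℓ:ℝ) := by ring
        _ ≤ 2 ^ (Fintype.card I) := h5
        _ = 2 ^ ((D i₀)ᶜ.card) * 2 ^ ((D i₀).card) := by rw [← hde]; ring
    have h7 : a ^ 2 * (ℓ:ℝ) ≤ 2 ^ ((D i₀).card) :=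
      le_of_mul_le_mul_left h6 h2e
    exact h7.trans hdm
  have hpow_succ : (2:ℝ) ^ (m + 1) = 2 ^ m * 2 := pow_succ 2 m
  have hεb : a ^ 2 ≤ ε ^ 2 := by
    nlinarith [hkey2, hlm', hℓR, hε2, sq_nonneg a]
  rw [abs_le]
  constructor <;> nlinarith [hεb, hε0]
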